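/- The string Fourier transform F_s on n-qudits is unitary: F_s · F_sᴴ = 1 and F_sᴴ · F_s = 1. -/

import Mathlib

open Matrix Finset

section helpers
variable {d : ℕ} [NeZero d] {q : ℂ}

private lemma q_cong' (hq0 : q ≠ 0) (hqd : q ^ (d : ℤ) = 1) {a b : ℤ}
    (h : (a : ZMod d) = (b : ZMod d)) : q ^ a = q ^ b := by
  rw [ZMod.intCast_eq_intCast_iff] at h
  obtain ⟨m, hm⟩ := h.dvd
  have hab : a = b - d * m := by linarith
  rw [hab, zpow_sub₀ hq0, _root_.zpow_mul, hqd, _root_.one_zpow, div_one]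

omit [NeZero d] in
private lemma prod_q_zpow' (hq0 : q ≠ 0) {α : Type*} (s : Finset α) (e : α → ℤ) :
    ∏ x ∈ s, q ^ e x = q ^ (∑ x ∈ s, e x) := by
  classical
  induction s using Finset.cons_induction with
  | empty => simp
  | cons a s ha ih => rw [prod_cons, sum_cons, zpow_add₀ hq0, ih]

omit [NeZero d] in
private lemma q_eq_one_iff' (hd : (d:ℕ) ≠ 0)
    (hq : q = Complex.exp (2 * Real.pi * Complex.I / d)) (a : ℤ) :
    q ^ a = 1 ↔ (a : ZMod d) = 0 := by
  have hdC : (d : ℂ) ≠ 0 := Nat.cast_ne_zero.mpr hd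
  have h2 : (2 * (Real.pi:ℂ) * Complex.I) ≠ 0 := by
    simp [Real.pi_ne_zero, Complex.I_ne_zero]
  rw [hq, ← Complex.exp_int_mul, Complex.exp_eq_one_iff, ZMod.intCast_zmod_eq_zero_iff_dvd]
  constructor
  · rintro ⟨m, hm⟩
    refine ⟨m, ?_⟩
    field_simp at hm
    have hm' : (a : ℂ) * (2 * Real.pi * Complex.I)
        = ((m * d : ℤ) : ℂ) * (2 * Real.pi * Complex.I) := by
      push_cast; linear_combination (2 * Real.pi * Complex.I) * hm
    rw [mul_comm]; exact_mod_cast mul_right_cancel₀ h2 hm'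
  · rintro ⟨m, hm⟩
    exact ⟨m, by rw [hm]; push_cast; field_simp⟩

private lemma char_sum' (hq0 : q ≠ 0) (hqd : q ^ (d : ℤ) = 1)
    (hq1 : ∀ a : ℤ, q ^ a = 1 ↔ (a : ZMod d) = 0) (a : ℤ) :
    ∑ x : ZMod d, q ^ (a * (x.val : ℤ)) = if (a : ZMod d) = 0 then (d : ℂ) else 0 := by
  split_ifs with h
  · have h1 : ∀ x : ZMod d, q ^ (a * (x.val : ℤ)) = 1 := by
      intro x
      rw [show (1:ℂ) = q ^ (0:ℤ) by simp]
      apply q_cong' hq0 hqd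
      push_cast [ZMod.natCast_val, ZMod.cast_id]
      rw [h, zero_mul]
    rw [Finset.sum_congr rfl (fun x _ => h1 x)]
    simp [ZMod.card]
  · set T := ∑ x : ZMod d, q ^ (a * (x.val : ℤ)) with hT
    have hshift : q ^ a * T = T := by
      rw [hT, Finset.mul_sum]
      have step : ∀ x : ZMod d,
          q ^ a * q ^ (a * (x.val : ℤ)) = q ^ (a * (((x + 1 : ZMod d)).val : ℤ)) := by
        intro x
        rw [← zpow_add₀ hq0]
        apply q_cong' hq0 hqd
        push_cast [ZMod.natCast_val, ZMod.cast_id]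
        ring
      rw [Finset.sum_congr rfl (fun x _ => step x)]
      exact Fintype.sum_equiv (Equiv.addRight 1) _ _ (fun x => rfl)
    have h0 : (q ^ a - 1) * T = 0 := by rw [sub_mul, one_mul, hshift, sub_self]
    rcases mul_eq_zero.mp h0 with h1 | h1
    · exact absurd ((hq1 a).mp (sub_eq_zero.mp h1)) h
    · exact h1

private lemma star_q_zpow' {q : ℂ} (h : ‖q‖ = 1) (e : ℤ) :
    star (q ^ e) = q ^ (-e) := by
  rw [star_zpow₀, _root_.zpow_neg, ← _root_.inv_zpow]
  congr 1
  exact (Complex.inv_eq_conj h).symm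

private lemma pow_mul_star_pow' {z : ℂ} (h : ‖z‖ = 1) (v : ℕ) :
    z ^ v * star (z ^ v) = 1 := by
  have hs : star (z ^ v) = (starRingEnd ℂ) (z ^ v) := rfl
  rw [hs, Complex.mul_conj, Complex.normSq_eq_norm_sq, norm_pow, h]
  norm_num

private lemma sum_ite_unique' (s0 R : ZMod d) (C : ℂ) :
    ∑ x : ZMod d, (if s0 = x + R then C else 0) = C := by
  rw [Finset.sum_eq_single (s0 - R)]
  · rw [if_pos (by ring)]
  · intro x _ hx
    rw [if_neg]
    intro hc
    exact hx (eq_sub_of_add_eq hc.symm)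
  · intro hm; exact absurd (Finset.mem_univ _) hm

end helpers

/-- The string Fourier transform `F_s` on `n`-qudits: its `(ℓ, k)` entry equals
`d^{(1-n)/2} · ζ^{|ℓ|²} · ∏_{j₁ < j₂} q^{-ℓ_{j₁} k_{j₂}}` if `|ℓ| = |k|`, and `0` otherwise. -/
noncomputable def SFT (d n : ℕ) (q ζ : ℂ) :
    Matrix (Fin n → ZMod d) (Fin n → ZMod d) ℂ :=
  Matrix.of fun l k =>
    if (∑ j, l j) = (∑ j, k j) then
      (Real.sqrt d : ℂ) ^ (1 - (n : ℤ)) * ζ ^ (∑ j, l j).val ^ 2 *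
        ∏ p ∈ Finset.univ.filter (fun p : Fin n × Fin n => p.1 < p.2),
          q ^ (-(((l p.1).val * (k p.2).val : ℕ) : ℤ))
    else 0

/-- the string Fourier transform on `n`-qudits is unitary:
`F_s · F_sᴴ = 1` and `F_sᴴ · F_s = 1`. -/
theorem stmt_7 (d n : ℕ) [NeZero d] (hn : 1 ≤ n) (q ζ : ℂ)
    (hq : q = Complex.exp (2 * Real.pi * Complex.I / d))
    (hζ2 : ζ ^ 2 = q) (hζd : ζ ^ d ^ 2 = 1) :
    SFT d n q ζ * (SFT d n q ζ)ᴴ = 1 ∧ (SFT d n q ζ)ᴴ * SFT d n q ζ = 1 := by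
  obtain ⟨m, rfl⟩ : ∃ m, n = m + 1 := ⟨n - 1, by omega⟩
  -- basic facts
  have hd : d ≠ 0 := NeZero.ne d
  have hdC : (d : ℂ) ≠ 0 := Nat.cast_ne_zero.mpr hd
  have hqdN : q ^ (d : ℕ) = 1 := by
    have h1 : ((d:ℂ)) * (2 * Real.pi * Complex.I / d) = 2 * Real.pi * Complex.I := by field_simp
    rw [hq, ← Complex.exp_nat_mul, h1, Complex.exp_two_pi_mul_I]
  have hqd : q ^ (d : ℤ) = 1 := by rw [zpow_natCast]; exact hqdN
  have hq0 : q ≠ 0 := by rw [hq]; exact Complex.exp_ne_zero _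
  have hq1 : ∀ a : ℤ, q ^ a = 1 ↔ (a : ZMod d) = 0 := q_eq_one_iff' hd hq
  have habsq : ‖q‖ = 1 := by
    exact Complex.norm_eq_one_of_pow_eq_one hqdN hd
  have habsζ : ‖ζ‖ = 1 := by
    exact Complex.norm_eq_one_of_pow_eq_one hζd (by positivity)
  have hsd : (Real.sqrt d : ℂ) * (Real.sqrt d : ℂ) = (d : ℂ) := by
    rw [← Complex.ofReal_mul, Real.mul_self_sqrt (Nat.cast_nonneg d)]
    norm_num
  -- main entry computation
  have h1 : SFT d (m+1) q ζ * (SFT d (m+1) q ζ)ᴴ = 1 := by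
    refine Matrix.ext fun l l' => ?_
    rw [Matrix.mul_apply, Matrix.one_apply]
    simp only [Matrix.conjTranspose_apply]
    by_cases h : (∑ j, l j) = (∑ j, l' j)
    · -- equal total charge
      set b : Fin (m+1) → ℤ := fun j => ((l' j).val : ℤ) - ((l j).val : ℤ) with hbdef
      set S : Fin (m+1) → ℤ :=
        fun j2 => ∑ j1 ∈ Finset.univ.filter (fun j1 => j1 < j2), b j1 with hSdef
      have hS0 : S 0 = 0 := by
        rw [hSdef]
        simp
      set D : ℂ := (d : ℂ) ^ (1 - ((m+1 : ℕ) : ℤ)) with hDdef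
      have hterm : ∀ k, (SFT d (m+1) q ζ) l k * star ((SFT d (m+1) q ζ) l' k)
          = if (∑ j, l j) = (∑ j, k j) then
              D * q ^ (∑ j2, S j2 * ((k j2).val : ℤ)) else 0 := by
        intro k
        simp only [SFT, Matrix.of_apply]
        rw [← h]
        by_cases hk : (∑ j, l j) = (∑ j, k j)
        · rw [if_pos hk, if_pos hk, if_pos hk]
          have hexp : ∑ p ∈ Finset.univ.filter (fun p : Fin (m+1) × Fin (m+1) => p.1 < p.2),
              ((-(((l p.1).val * (k p.2).val : ℕ) : ℤ)) + (((l' p.1).val * (k p.2).val : ℕ) : ℤ))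
              = ∑ j2, S j2 * ((k j2).val : ℤ) := by
            rw [Finset.sum_filter, Fintype.sum_prod_type_right]
            refine Finset.sum_congr rfl fun j2 _ => ?_
            calc ∑ j1, (if j1 < j2 then
                    (-(((l j1).val * (k j2).val : ℕ) : ℤ)) + (((l' j1).val * (k j2).val : ℕ) : ℤ)
                  else 0)
                = ∑ j1 ∈ Finset.univ.filter (fun j1 => j1 < j2),
                    ((-(((l j1).val * (k j2).val : ℕ) : ℤ)) + (((l' j1).val * (k j2).val : ℕ) : ℤ)) :=
                  (Finset.sum_filter _ _).symm
              _ = ∑ j1 ∈ Finset.univ.filter (fun j1 => j1 < j2), b j1 * ((k j2).val : ℤ) := by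
                  refine Finset.sum_congr rfl fun j1 _ => ?_
                  rw [hbdef]
                  push_cast
                  ring
              _ = S j2 * ((k j2).val : ℤ) := by rw [hSdef, Finset.sum_mul]
          calc ((Real.sqrt d : ℂ) ^ (1 - ((m+1 : ℕ) : ℤ)) * ζ ^ (∑ j, l j).val ^ 2 *
                  ∏ p ∈ Finset.univ.filter (fun p : Fin (m+1) × Fin (m+1) => p.1 < p.2),
                    q ^ (-(((l p.1).val * (k p.2).val : ℕ) : ℤ)))
                * star ((Real.sqrt d : ℂ) ^ (1 - ((m+1 : ℕ) : ℤ)) * ζ ^ (∑ j, l j).val ^ 2 *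
                  ∏ p ∈ Finset.univ.filter (fun p : Fin (m+1) × Fin (m+1) => p.1 < p.2),
                    q ^ (-(((l' p.1).val * (k p.2).val : ℕ) : ℤ)))
              = ((Real.sqrt d : ℂ) ^ (1 - ((m+1 : ℕ) : ℤ)) *
                    star ((Real.sqrt d : ℂ) ^ (1 - ((m+1 : ℕ) : ℤ)))) *
                  (ζ ^ (∑ j, l j).val ^ 2 * star (ζ ^ (∑ j, l j).val ^ 2)) *
                  ((∏ p ∈ Finset.univ.filter (fun p : Fin (m+1) × Fin (m+1) => p.1 < p.2),
                    q ^ (-(((l p.1).val * (k p.2).val : ℕ) : ℤ))) *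
                   star (∏ p ∈ Finset.univ.filter (fun p : Fin (m+1) × Fin (m+1) => p.1 < p.2),
                    q ^ (-(((l' p.1).val * (k p.2).val : ℕ) : ℤ)))) := by
                rw [star_mul', star_mul']
                ring
            _ = D * q ^ (∑ j2, S j2 * ((k j2).val : ℤ)) := by
                rw [star_zpow₀, show star ((Real.sqrt d : ℂ)) = (Real.sqrt d : ℂ) from
                      Complex.conj_ofReal _,
                    ← mul_zpow, hsd, pow_mul_star_pow' habsζ, star_prod]
                rw [Finset.prod_congr rfl
                      (fun p _ => by rw [star_q_zpow' habsq, neg_neg] :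
                        ∀ p ∈ Finset.univ.filter (fun p : Fin (m+1) × Fin (m+1) => p.1 < p.2),
                          star (q ^ (-(((l' p.1).val * (k p.2).val : ℕ) : ℤ)))
                            = q ^ ((((l' p.1).val * (k p.2).val : ℕ) : ℤ))),
                  ← Finset.prod_mul_distrib]
                rw [Finset.prod_congr rfl (fun p _ => (zpow_add₀ hq0 _ _).symm)]
                rw [prod_q_zpow' hq0, hexp, hDdef]
                ring
        · rw [if_neg hk, if_neg hk, if_neg hk, zero_mul]
      rw [Finset.sum_congr rfl (fun k _ => hterm k)]
      have hpull : ∑ k : Fin (m+1) → ZMod d, (if (∑ j, l j) = (∑ j, k j) then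
            D * q ^ (∑ j2, S j2 * ((k j2).val : ℤ)) else 0)
          = D * ∑ k : Fin (m+1) → ZMod d, (if (∑ j, l j) = (∑ j, k j) then
            q ^ (∑ j2, S j2 * ((k j2).val : ℤ)) else 0) := by
        rw [Finset.mul_sum]
        refine Finset.sum_congr rfl fun k _ => ?_
        split_ifs <;> simp
      rw [hpull]
      have hT : (∑ k : Fin (m+1) → ZMod d, (if (∑ j, l j) = (∑ j, k j) then
            q ^ (∑ j2, S j2 * ((k j2).val : ℤ)) else 0))
          = ∏ i : Fin m, (if ((S i.succ : ℤ) : ZMod d) = 0 then (d : ℂ) else 0) := by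
        calc (∑ k : Fin (m+1) → ZMod d, (if (∑ j, l j) = (∑ j, k j) then
                q ^ (∑ j2, S j2 * ((k j2).val : ℤ)) else 0))
            = ∑ p : ZMod d × (Fin m → ZMod d), (if (∑ j, l j) = (∑ j, (Fin.cons p.1 p.2 : Fin (m+1) → ZMod d) j) then
                q ^ (∑ j2, S j2 * (((Fin.cons p.1 p.2 : Fin (m+1) → ZMod d) j2).val : ℤ)) else 0) :=
              (Fintype.sum_equiv (Fin.consEquiv fun _ => ZMod d) _ _ (fun p => rfl)).symm
          _ = ∑ x : ZMod d, ∑ r : Fin m → ZMod d, (if (∑ j, l j) = x + (∑ i, r i) then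
                q ^ (∑ i : Fin m, S i.succ * ((r i).val : ℤ)) else 0) := by
              rw [Fintype.sum_prod_type]
              refine Finset.sum_congr rfl fun x _ => Finset.sum_congr rfl fun r _ => ?_
              have hc1 : (∑ j, (Fin.cons x r : Fin (m+1) → ZMod d) j) = x + ∑ i, r i :=
                Fin.sum_cons x r
              have hc2 : (∑ j2, S j2 * (((Fin.cons x r : Fin (m+1) → ZMod d) j2).val : ℤ))
                  = ∑ i : Fin m, S i.succ * ((r i).val : ℤ) := by
                rw [Fin.sum_univ_succ]
                simp only [Fin.cons_zero, Fin.cons_succ, hS0, zero_mul, zero_add]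
              rw [hc1, hc2]
          _ = ∑ r : Fin m → ZMod d, ∑ x : ZMod d, (if (∑ j, l j) = x + (∑ i, r i) then
                q ^ (∑ i : Fin m, S i.succ * ((r i).val : ℤ)) else 0) := Finset.sum_comm
          _ = ∑ r : Fin m → ZMod d, q ^ (∑ i : Fin m, S i.succ * ((r i).val : ℤ)) :=
              Finset.sum_congr rfl fun r _ => sum_ite_unique' _ _ _
          _ = ∑ r : Fin m → ZMod d, ∏ i : Fin m, q ^ (S i.succ * ((r i).val : ℤ)) :=
              Finset.sum_congr rfl fun r _ => (prod_q_zpow' hq0 _ _).symm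
          _ = ∏ i : Fin m, ∑ x : ZMod d, q ^ (S i.succ * ((x).val : ℤ)) := by
              rw [Finset.prod_univ_sum, Fintype.piFinset_univ]
          _ = ∏ i : Fin m, (if ((S i.succ : ℤ) : ZMod d) = 0 then (d : ℂ) else 0) :=
              Finset.prod_congr rfl fun i _ => char_sum' hq0 hqd hq1 _
      rw [hT]
      by_cases hall : ∀ i : Fin m, ((S i.succ : ℤ) : ZMod d) = 0
      · -- l = l'
        have hQ : ∀ t : ℕ, t ≤ m + 1 →
            (∑ j1 ∈ Finset.univ.filter (fun j1 : Fin (m+1) => (j1 : ℕ) < t), (l' j1 - l j1))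
              = (0 : ZMod d) := by
          intro t ht
          rcases Nat.eq_zero_or_pos t with rfl | htpos
          · simp
          rcases eq_or_lt_of_le ht with rfl | htlt
          · have huniv : Finset.univ.filter (fun j1 : Fin (m+1) => (j1 : ℕ) < m + 1)
                = Finset.univ := Finset.filter_true_of_mem fun j _ => j.isLt
            rw [huniv, Finset.sum_sub_distrib, sub_eq_zero]
            exact h.symm
          · have hti : t - 1 < m := by omega
            set i0 : Fin m := ⟨t - 1, hti⟩ with hi0
            have hi := hall i0
            have hset : Finset.univ.filter (fun j1 : Fin (m+1) => j1 < i0.succ)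
                = Finset.univ.filter (fun j1 : Fin (m+1) => (j1 : ℕ) < t) := by
              ext j1
              simp only [Finset.mem_filter, Finset.mem_univ, true_and, Fin.lt_def,
                Fin.val_succ, hi0]
              omega
            have hcast : ((S i0.succ : ℤ) : ZMod d)
                = ∑ j1 ∈ Finset.univ.filter (fun j1 : Fin (m+1) => (j1 : ℕ) < t),
                    (l' j1 - l j1) := by
              simp only [hSdef]
              rw [hset]
              push_cast [hbdef, ZMod.natCast_val, ZMod.cast_id]
              rfl
            rw [← hcast, hi]
        have hll' : l = l' := by
          funext j
          have hj1 : (∑ j1 ∈ Finset.univ.filter (fun j1 : Fin (m+1) => (j1 : ℕ) < (j : ℕ)),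
              (l' j1 - l j1)) = (0 : ZMod d) := hQ (j : ℕ) (by omega)
          have hj2 : (∑ j1 ∈ Finset.univ.filter (fun j1 : Fin (m+1) => (j1 : ℕ) < (j : ℕ) + 1),
              (l' j1 - l j1)) = (0 : ZMod d) := hQ ((j : ℕ) + 1) (by have := j.isLt; omega)
          have hsplit : Finset.univ.filter (fun j1 : Fin (m+1) => (j1 : ℕ) < (j : ℕ) + 1)
              = insert j (Finset.univ.filter (fun j1 : Fin (m+1) => (j1 : ℕ) < (j : ℕ))) := by
            ext j1
            simp only [Finset.mem_filter, Finset.mem_univ, true_and, Finset.mem_insert,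
              Fin.ext_iff]
            omega
          rw [hsplit, Finset.sum_insert (by simp), hj1, add_zero] at hj2
          exact (sub_eq_zero.mp hj2).symm
        rw [if_pos hll']
        rw [Finset.prod_congr rfl (fun i _ => if_pos (hall i)), Finset.prod_const,
          Finset.card_univ, Fintype.card_fin, hDdef]
        rw [show (1 - ((m+1 : ℕ) : ℤ)) = -(m : ℤ) by push_cast; ring]
        rw [show ((d:ℂ) ^ (m:ℕ) = (d:ℂ) ^ ((m:ℕ):ℤ)) from (zpow_natCast _ _).symm,
          ← zpow_add₀ hdC]
        norm_num
      · -- l ≠ l'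
        push_neg at hall
        obtain ⟨i, hi⟩ := hall
        have hzero : (if ((S i.succ : ℤ) : ZMod d) = 0 then (d : ℂ) else 0) = 0 := if_neg hi
        rw [Finset.prod_eq_zero (Finset.mem_univ i) hzero, mul_zero]
        rw [if_neg]
        intro he
        apply hi
        rw [hSdef, hbdef]
        subst he
        simp
    · -- unequal total charge: everything vanishes
      have hz : ∀ k, (SFT d (m+1) q ζ) l k * star ((SFT d (m+1) q ζ) l' k) = 0 := by
        intro k
        simp only [SFT, Matrix.of_apply]
        by_cases h1 : (∑ j, l j) = (∑ j, k j)
        · rw [if_neg (show ¬(∑ j, l' j) = (∑ j, k j) from fun h2 => h (h1.trans h2.symm)),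
            star_zero, mul_zero]
        · rw [if_neg h1, zero_mul]
      rw [Finset.sum_congr rfl (fun k _ => hz k), Finset.sum_const, smul_zero]
      rw [if_neg (fun he => h (by rw [he]))]
  exact ⟨h1, mul_eq_one_comm.mp h1⟩
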